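/- Work in the polynomial ring ℂ[z₁,z₂] and fix integers K > M ≥ 2 and N ≥ 3. Let F₁ = z₁^M and F₂ = z₂^N + z₂z₁^K. Then the quotient ring ℂ[z₁,z₂]/(F₁,F₂) is spanned as a ℂ-vector space by the images of the MN monomials z₁^k z₂^j with 0 ≤ k ≤ M−1 and 0 ≤ j ≤ N−1; in particular, the dimension of ℂ[z₁,z₂]/(F₁,F₂) as a ℂ-vector space is finite and at most MN. -/

import Mathlib

open MvPolynomial

/-- **Multiplicity bound for the Catlin–D'Angelo example (§4.1).**
For `F₁ = z₁^M` and `F₂ = z₂^N + z₂ z₁^K`, the quotient `ℂ[z₁,z₂]/(F₁,F₂)` is spanned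
over `ℂ` by the images of the `M·N` monomials `z₁^k z₂^j` (`k < M`, `j < N`); in
particular it is a finite-dimensional `ℂ`-vector space of dimension at most `M·N`. -/
theorem catlin_dangelo_multiplicity_le
    (M N K : ℕ) (hM : 2 ≤ M) (hN : 3 ≤ N) (hK : M < K)
    (F₁ F₂ : MvPolynomial (Fin 2) ℂ)
    (hF₁ : F₁ = X 0 ^ M)
    (hF₂ : F₂ = X 1 ^ N + X 1 * X 0 ^ K)
    (I : Ideal (MvPolynomial (Fin 2) ℂ)) (hI : I = Ideal.span {F₁, F₂}) :
    Submodule.span ℂ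
        (Set.range fun p : Fin M × Fin N =>
          Ideal.Quotient.mk I (X 0 ^ (p.1 : ℕ) * X 1 ^ (p.2 : ℕ))) = ⊤ ∧
      Module.Finite ℂ (MvPolynomial (Fin 2) ℂ ⧸ I) ∧
      Module.finrank ℂ (MvPolynomial (Fin 2) ℂ ⧸ I) ≤ M * N := by
  -- F₁ and F₂ are in I
  have hF₁I : F₁ ∈ I := by
    rw [hI]; exact Ideal.subset_span (by simp)
  have hF₂I : F₂ ∈ I := by
    rw [hI]; exact Ideal.subset_span (by simp)
  -- z₁^M ∈ I
  have hz1 : (X 0 : MvPolynomial (Fin 2) ℂ) ^ M ∈ I := hF₁ ▸ hF₁I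
  -- z₂^N ∈ I, since z₂^N = F₂ - z₂·z₁^(K-M)·z₁^M
  have hz2 : (X 1 : MvPolynomial (Fin 2) ℂ) ^ N ∈ I := by
    have h : (X 1 : MvPolynomial (Fin 2) ℂ) ^ N
        = F₂ - (X 1 * X 0 ^ (K - M)) * X 0 ^ M := by
      rw [hF₂]; ring_nf
      rw [mul_assoc, ← pow_add, Nat.sub_add_cancel hK.le]
      ring
    rw [h]
    exact Ideal.sub_mem I hF₂I (Ideal.mul_mem_left I _ hz1)
  -- every monomial image lies in the span
  set S : Set (MvPolynomial (Fin 2) ℂ ⧸ I) := Set.range fun p : Fin M × Fin N =>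
    Ideal.Quotient.mk I (X 0 ^ (p.1 : ℕ) * X 1 ^ (p.2 : ℕ)) with hS
  have key : ∀ a b : ℕ,
      Ideal.Quotient.mk I (X 0 ^ a * X 1 ^ b) ∈ Submodule.span ℂ S := by
    intro a b
    by_cases ha : a < M
    · by_cases hb : b < N
      · exact Submodule.subset_span ⟨(⟨a, ha⟩, ⟨b, hb⟩), rfl⟩
      · push_neg at hb
        have : (X 0 : MvPolynomial (Fin 2) ℂ) ^ a * X 1 ^ b ∈ I := by
          have h : (X 0 : MvPolynomial (Fin 2) ℂ) ^ a * X 1 ^ b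
              = (X 0 ^ a * X 1 ^ (b - N)) * X 1 ^ N := by
            rw [mul_assoc, ← pow_add, Nat.sub_add_cancel hb]
          rw [h]
          exact Ideal.mul_mem_left I _ hz2
        rw [Ideal.Quotient.eq_zero_iff_mem.mpr this]
        exact Submodule.zero_mem _
    · push_neg at ha
      have : (X 0 : MvPolynomial (Fin 2) ℂ) ^ a * X 1 ^ b ∈ I := by
        have h : (X 0 : MvPolynomial (Fin 2) ℂ) ^ a * X 1 ^ b
            = (X 0 ^ (a - M) * X 1 ^ b) * X 0 ^ M := by
          rw [mul_right_comm, mul_comm ((X 0 :MvPolynomial (Fin 2) ℂ) ^ (a - M)),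
            ← pow_add, Nat.add_sub_cancel' ha]
        rw [h]
        exact Ideal.mul_mem_left I _ hz1
      rw [Ideal.Quotient.eq_zero_iff_mem.mpr this]
      exact Submodule.zero_mem _
  have hspan : Submodule.span ℂ S = ⊤ := by
    rw [eq_top_iff]
    intro x _
    obtain ⟨p, rfl⟩ := Ideal.Quotient.mk_surjective x
    induction p using MvPolynomial.induction_on' with
    | monomial d c =>
        have hmono : (monomial d c : MvPolynomial (Fin 2) ℂ)
            = C c * (X 0 ^ (d 0) * X 1 ^ (d 1)) := by
          rw [monomial_eq, Finsupp.prod_fintype _ _ (fun i => pow_zero _),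
            Fin.prod_univ_two]
        rw [hmono, map_mul,
          show (Ideal.Quotient.mk I) (C c) = algebraMap ℂ _ c from rfl,
          ← Algebra.smul_def]
        exact Submodule.smul_mem _ _ (key _ _)
    | add p q hp hq =>
        rw [map_add]
        exact Submodule.add_mem _ (hp trivial) (hq trivial)
  refine ⟨hspan, ?_, ?_⟩
  · exact ⟨⟨(Set.finite_range _).toFinset, by
      rw [Set.Finite.coe_toFinset]; exact hspan⟩⟩
  · have := finrank_le_of_span_eq_top hspan
    simpa using this
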